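/- arXiv:1403.0548 — 3 statements merged into one kernel-verified Lean document; each statement's English description precedes it below -/
import Mathlib

section
/- Let K be a field equipped with a non-Archimedean additive valuation val : K → ℝ ∪ {∞}. Let f = Σ_{(i,j)∈S} a_{ij} x^i y^j be a nonzero polynomial in K[x,y], where S is the support of f (so a_{ij} ≠ 0 for all (i,j) ∈ S). If p = (p₁,p₂) ∈ (K\{0})² satisfies f(p₁,p₂) = 0, then the minimum over (i,j) ∈ S of val(a_{ij}) + i·val(p₁) + j·val(p₂) is attained for at least two distinct elements of S. -/
private lemma withTop_add_self_eq_zero {x : WithTop ℝ} (h : x + x = 0) : x = 0 := by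
  cases x with
  | top => simp at h
  | coe r =>
    have : r + r = 0 := by exact_mod_cast h
    have : r = 0 := by linarith
    exact_mod_cast this

/-- Let `K` be a field with a non-Archimedean additive valuation
`v : K → ℝ ∪ {∞}`.  Let `f = Σ_{(i,j)∈S} a_{ij} x^i y^j` be a nonzero polynomial whose
support is exactly `S` (so `a ij ≠ 0` for all `ij ∈ S`).  If a point `p = (p₁,p₂)` of the
torus satisfies `f p = 0`, then the minimum over `S` of `v (a ij) + i • v p₁ + j • v p₂`
is attained at at least two distinct elements of `S`. -/
theorem min_attained_twice_of_zero {K : Type*} [Field K]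
    (v : K → WithTop ℝ)
    (hv0 : ∀ a : K, v a = ⊤ ↔ a = 0)
    (hvmul : ∀ a b : K, v (a * b) = v a + v b)
    (hvadd : ∀ a b : K, min (v a) (v b) ≤ v (a + b))
    (S : Finset (ℕ × ℕ)) (hS : S.Nonempty) (a : ℕ × ℕ → K)
    (ha : ∀ ij ∈ S, a ij ≠ 0)
    (p₁ p₂ : K) (hp₁ : p₁ ≠ 0) (hp₂ : p₂ ≠ 0)
    (m : ℕ × ℕ → WithTop ℝ)
    (hm : ∀ ij : ℕ × ℕ, m ij = v (a ij) + ij.1 • v p₁ + ij.2 • v p₂)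
    (hzero : ∑ ij ∈ S, a ij * p₁ ^ ij.1 * p₂ ^ ij.2 = 0) :
    ∃ ij ∈ S, ∃ kl ∈ S, ij ≠ kl ∧ m ij = S.inf m ∧ m kl = S.inf m := by
  -- v 1 = 0
  have hv1 : v 1 = 0 := by
    have h : v 1 + v 1 = v 1 := by rw [← hvmul]; norm_num
    cases hx : v 1 with
    | top => exact absurd ((hv0 1).1 hx) one_ne_zero
    | coe r =>
      rw [hx] at h
      have : r + r = r := by exact_mod_cast h
      have : r = 0 := by linarith
      exact_mod_cast this
  -- v (-x) = v x
  have hvneg : ∀ x : K, v (-x) = v x := by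
    intro x
    have h : v (-1) + v (-1) = 0 := by rw [← hvmul]; norm_num [hv1]
    have h1 : v (-1 : K) = 0 := withTop_add_self_eq_zero h
    have : v (-x) = v (-1) + v x := by rw [← hvmul]; ring_nf
    rw [this, h1, zero_add]
  -- v (x^n) = n • v x
  have hvpow : ∀ (x : K) (n : ℕ), v (x ^ n) = n • v x := by
    intro x n
    induction n with
    | zero => simp [hv1]
    | succ k ih => rw [pow_succ, hvmul, ih, succ_nsmul]
  -- m ij is the valuation of the corresponding term
  have hterm : ∀ ij : ℕ × ℕ, v (a ij * p₁ ^ ij.1 * p₂ ^ ij.2) = m ij := by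
    intro ij
    rw [hvmul, hvmul, hvpow, hvpow, hm]
  -- m ij ≠ ⊤ for ij ∈ S
  have hmtop : ∀ ij ∈ S, m ij ≠ ⊤ := by
    intro ij hij
    rw [← hterm ij]
    rw [Ne, hv0]
    exact mul_ne_zero (mul_ne_zero (ha ij hij) (pow_ne_zero _ hp₁)) (pow_ne_zero _ hp₂)
  -- lower bound for sums
  have hsum : ∀ T : Finset (ℕ × ℕ),
      T.inf (fun kl => v (a kl * p₁ ^ kl.1 * p₂ ^ kl.2))
        ≤ v (∑ kl ∈ T, a kl * p₁ ^ kl.1 * p₂ ^ kl.2) := by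
    intro T
    induction T using Finset.induction_on with
    | empty => simp [(hv0 0).2 rfl]
    | insert x s hx ih =>
      rw [Finset.sum_insert hx, Finset.inf_insert]
      exact le_trans (min_le_min le_rfl ih) (hvadd _ _)
  -- ultrametric equality
  have hlt : ∀ x y : K, v x < v y → v (x + y) = v x := by
    intro x y hxy
    refine le_antisymm ?_ ?_
    · by_contra hcon
      push_neg at hcon
      have h2 : v x = v ((x + y) + (-y)) := by ring_nf
      have h3 : min (v (x + y)) (v (-y)) ≤ v x := h2 ▸ hvadd (x + y) (-y)
      rw [hvneg] at h3
      exact absurd h3 (not_le.2 (lt_min hcon hxy))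
    · calc v x = min (v x) (v y) := (min_eq_left hxy.le).symm
        _ ≤ v (x + y) := hvadd x y
  -- choose a minimizer
  obtain ⟨ij, hijS, hij⟩ := Finset.exists_mem_eq_inf S hS m
  by_contra hcon
  push_neg at hcon
  -- every other element has strictly larger m
  have hgt : ∀ kl ∈ S, kl ≠ ij → S.inf m < m kl := by
    intro kl hklS hne
    have h1 := hcon ij hijS kl hklS (Ne.symm hne)
    have h2 : m kl ≠ S.inf m := fun h => h1 hij.symm h
    exact lt_of_le_of_ne (Finset.inf_le hklS) (Ne.symm h2)
  -- the rest of the sum has strictly larger valuation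
  set rest := ∑ kl ∈ S.erase ij, a kl * p₁ ^ kl.1 * p₂ ^ kl.2 with hrest
  have hrest_gt : m ij < v rest := by
    rcases (S.erase ij).eq_empty_or_nonempty with he | hne
    · have : rest = 0 := by rw [hrest, he, Finset.sum_empty]
      rw [this, (hv0 0).2 rfl]
      exact lt_top_iff_ne_top.2 (hij ▸ hmtop ij hijS)
    · obtain ⟨kl₀, hkl₀, hkl₀inf⟩ := Finset.exists_mem_eq_inf (S.erase ij)
        hne (fun kl => v (a kl * p₁ ^ kl.1 * p₂ ^ kl.2))
      have hklS : kl₀ ∈ S := Finset.mem_of_mem_erase hkl₀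
      have hklne : kl₀ ≠ ij := Finset.ne_of_mem_erase hkl₀
      have h1 : m ij < m kl₀ := hij ▸ hgt kl₀ hklS hklne
      calc m ij < m kl₀ := h1
        _ = v (a kl₀ * p₁ ^ kl₀.1 * p₂ ^ kl₀.2) := (hterm kl₀).symm
        _ = (S.erase ij).inf (fun kl => v (a kl * p₁ ^ kl.1 * p₂ ^ kl.2)) := hkl₀inf.symm
        _ ≤ v rest := hsum _
  -- split off the term at ij
  have hsplit : a ij * p₁ ^ ij.1 * p₂ ^ ij.2 + rest = 0 := by
    rw [hrest, ← hzero]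
    exact Finset.add_sum_erase S (fun kl => a kl * p₁ ^ kl.1 * p₂ ^ kl.2) hijS
  have hvzero : v (a ij * p₁ ^ ij.1 * p₂ ^ ij.2 + rest) = m ij := by
    rw [hlt _ _ (by rw [hterm]; exact hrest_gt), hterm]
  rw [hsplit, (hv0 0).2 rfl] at hvzero
  exact hmtop ij hijS hvzero.symm
end

section
/- Let K be an algebraically closed field equipped with a non-Archimedean additive valuation val : K → ℝ ∪ {∞}. Let t, c₁, ..., c₆ ∈ K with val(t) = 1 and val(cᵢ) = 0 for all i. Set f = c₁ + c₂x + c₃y, g = c₄x + c₅xy + t c₆y, and B = c₃c₄ − c₁c₅ − t c₂c₆, and suppose r := val(B) ≤ 1/2. Then: the resultant of f and g with respect to y has degree exactly 2 in x with nonzero constant term; every common zero of f and g in K² lies in (K\{0})²; the common zeros correspond bijectively to the roots of this resultant (counted with multiplicity, there are two); and the multiset of images of the common zeros under p ↦ (val(p₁), val(p₂)), counted with the multiplicity of the corresponding resultant root, equals {(r, 0), (1−r, 0)}. -/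
open Polynomial

/-- The `(m+n) × (m+n)` Sylvester matrix of two polynomials `f` and `g` over a
commutative ring, regarded with formal degrees `m` and `n` respectively. -/
noncomputable def sylvester {R : Type*} [CommRing R] (m n : ℕ) (f g : R[X]) :
    Matrix (Fin (m + n)) (Fin (m + n)) R :=
  Matrix.of fun i j =>
    if (i : ℕ) < n then
      (if (i : ℕ) ≤ (j : ℕ) ∧ (j : ℕ) ≤ (i : ℕ) + m then f.coeff (m + i - j) else 0)
    else
      (if (i : ℕ) - n ≤ (j : ℕ) ∧ (j : ℕ) ≤ ((i : ℕ) - n) + n then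
        g.coeff (n + ((i : ℕ) - n) - j) else 0)

/-- The resultant of `f` and `g`, regarded with formal degrees `m` and `n`:
the determinant of the Sylvester matrix. -/
noncomputable def resultant {R : Type*} [CommRing R] (m n : ℕ) (f g : R[X]) : R :=
  (sylvester m n f g).det

/-- Let `K` be an algebraically closed field with a non-Archimedean
additive valuation `v`, let `v t = 1`, `v cᵢ = 0`, and set `f = c₁ + c₂x + c₃y`,
`g = c₄x + c₅xy + t c₆ y` and `B = c₃c₄ − c₁c₅ − t c₂c₆` with `r := v B ≤ 1/2`.
Then the resultant `Res` of `f` and `g` with respect to `y` has degree exactly `2` in `x`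
with nonzero constant term; every common zero of `f` and `g` in `K²` lies in the torus;
the common zeros correspond bijectively to the roots of `Res` (counted with multiplicity,
there are two); and the multiset of images of the common zeros under
`p ↦ (v p₁, v p₂)`, counted with the multiplicity of the corresponding resultant root,
equals `{(r, 0), (1 − r, 0)}`. -/
theorem trop_intersection_line_conic_generic {K : Type*} [Field K] [IsAlgClosed K]
    (v : K → WithTop ℝ)
    (hv0 : ∀ a : K, v a = ⊤ ↔ a = 0)
    (hvmul : ∀ a b : K, v (a * b) = v a + v b)
    (hvadd : ∀ a b : K, min (v a) (v b) ≤ v (a + b))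
    (t c₁ c₂ c₃ c₄ c₅ c₆ : K)
    (ht : v t = ((1 : ℝ) : WithTop ℝ))
    (hc₁ : v c₁ = 0) (hc₂ : v c₂ = 0) (hc₃ : v c₃ = 0)
    (hc₄ : v c₄ = 0) (hc₅ : v c₅ = 0) (hc₆ : v c₆ = 0)
    (r : ℝ) (hB : v (c₃ * c₄ - c₁ * c₅ - t * c₂ * c₆) = (r : WithTop ℝ)) (hr : r ≤ 1 / 2)
    (F G : K × K → K)
    (hF : ∀ p : K × K, F p = c₁ + c₂ * p.1 + c₃ * p.2)
    (hG : ∀ p : K × K, G p = c₄ * p.1 + c₅ * p.1 * p.2 + t * c₆ * p.2)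
    (Res : K[X])
    (hRes : Res = _root_.resultant 1 1
      (Polynomial.C (Polynomial.C c₃) * Polynomial.X +
        Polynomial.C (Polynomial.C c₁ + Polynomial.C c₂ * Polynomial.X))
      (Polynomial.C (Polynomial.C c₅ * Polynomial.X + Polynomial.C (t * c₆)) * Polynomial.X +
        Polynomial.C (Polynomial.C c₄ * Polynomial.X))) :
    Res.natDegree = 2 ∧ Res.coeff 0 ≠ 0 ∧
    (∀ p : K × K, F p = 0 → G p = 0 → p.1 ≠ 0 ∧ p.2 ≠ 0) ∧
    (∀ p : K × K, F p = 0 → G p = 0 → p.1 ∈ Res.roots) ∧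
    (∀ x ∈ Res.roots, ∃! y : K, F (x, y) = 0 ∧ G (x, y) = 0) ∧
    Multiset.card Res.roots = 2 ∧
    (∃ Y : K → K, (∀ x ∈ Res.roots, F (x, Y x) = 0 ∧ G (x, Y x) = 0) ∧
      Res.roots.map (fun x => (v x, v (Y x))) =
        {((r : WithTop ℝ), (0 : WithTop ℝ)), (((1 - r : ℝ) : WithTop ℝ), (0 : WithTop ℝ))}) := by
  -- basic valuation facts
  have hvne : ∀ a : K, a ≠ 0 → v a ≠ ⊤ := fun a ha h => ha ((hv0 a).mp h)
  have hzne : ∀ a : K, v a = 0 → a ≠ 0 := fun a h ha => by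
    rw [(hv0 a).mpr ha] at h; exact (by simp : (⊤ : WithTop ℝ) ≠ 0) h
  have htne : t ≠ 0 := fun ha => by
    rw [(hv0 t).mpr ha] at ht; exact (by simp : (⊤ : WithTop ℝ) ≠ ((1:ℝ):WithTop ℝ)) ht
  have hc₁ne : c₁ ≠ 0 := hzne _ hc₁
  have hc₂ne : c₂ ≠ 0 := hzne _ hc₂
  have hc₃ne : c₃ ≠ 0 := hzne _ hc₃
  have hc₄ne : c₄ ≠ 0 := hzne _ hc₄
  have hc₅ne : c₅ ≠ 0 := hzne _ hc₅
  have hc₆ne : c₆ ≠ 0 := hzne _ hc₆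
  have hv1 : v 1 = 0 := by
    have h := hvmul 1 1
    rw [one_mul] at h
    obtain ⟨x, hx⟩ := WithTop.ne_top_iff_exists.mp (hvne 1 one_ne_zero)
    rw [← hx, ← WithTop.coe_add] at h
    have h2 : x = x + x := by exact_mod_cast h
    have h3 : x = 0 := by linarith
    rw [← hx, h3]; rfl
  have hvneg1 : v (-1) = 0 := by
    have h := hvmul (-1) (-1)
    rw [neg_one_mul, neg_neg, hv1] at h
    obtain ⟨x, hx⟩ := WithTop.ne_top_iff_exists.mp (hvne (-1) (by norm_num))
    rw [← hx, ← WithTop.coe_add] at h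
    have hx0 : x = 0 := by
      have h4 : (0:ℝ) = x + x := by exact_mod_cast h
      linarith
    rw [← hx, hx0]; rfl
  have hvneg : ∀ a : K, v (-a) = v a := by
    intro a
    have h := hvmul (-1) a
    rw [neg_one_mul, hvneg1, zero_add] at h
    exact h
  have hvlt : ∀ a b : K, v a < v b → v (a + b) = v a := by
    intro a b h
    have low : v a ≤ v (a + b) := by
      have := hvadd a b; rwa [min_eq_left h.le] at this
    have h2 : min (v (a + b)) (v b) ≤ v a := by
      have := hvadd (a + b) (-b)
      rwa [add_neg_cancel_right, hvneg] at this
    rcases le_or_gt (v (a + b)) (v a) with hle | hlt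
    · exact le_antisymm hle low
    · exact absurd h2 (not_le.mpr (lt_min hlt h))
  -- explicit resultant
  have hRes2 : Res = C (-(c₂*c₅)) * X^2 + C (c₃*c₄ - c₁*c₅ - t*c₂*c₆) * X + C (-(t*c₁*c₆)) := by
    rw [hRes, _root_.resultant, show (_root_.sylvester 1 1 _ _).det = _ from Matrix.det_fin_two _]
    simp [_root_.sylvester, coeff_add, coeff_C_mul, coeff_C, coeff_X]
    ring
  have hdeg : Res.natDegree = 2 := by
    rw [hRes2]
    exact Polynomial.natDegree_quadratic (by simp [hc₂ne, hc₅ne])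
  have hResne : Res ≠ 0 := fun h => by simp [h] at hdeg
  have hcoeff0 : Res.coeff 0 = -(t*c₁*c₆) := by
    rw [hRes2]; simp
  -- torus
  have htorus : ∀ p : K × K, F p = 0 → G p = 0 → p.1 ≠ 0 ∧ p.2 ≠ 0 := by
    intro p hFp hGp
    rw [hF] at hFp; rw [hG] at hGp
    constructor
    · intro h
      rw [h] at hFp hGp
      have hp2 : p.2 = 0 := by
        have h2 : t * c₆ * p.2 = 0 := by linear_combination hGp
        rcases mul_eq_zero.mp h2 with h3 | h3
        · exact absurd h3 (mul_ne_zero htne hc₆ne)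
        · exact h3
      exact hc₁ne (by linear_combination hFp - c₃ * hp2)
    · intro h
      rw [h] at hFp hGp
      have hp1 : p.1 = 0 := by
        have h2 : c₄ * p.1 = 0 := by linear_combination hGp
        exact (mul_eq_zero.mp h2).resolve_left hc₄ne
      exact hc₁ne (by linear_combination hFp - c₂ * hp1)
  -- eval of Res at common zeros
  have hmem : ∀ p : K × K, F p = 0 → G p = 0 → p.1 ∈ Res.roots := by
    intro p hFp hGp
    rw [hF] at hFp; rw [hG] at hGp
    rw [mem_roots hResne]
    show Res.eval p.1 = 0
    rw [hRes2]
    simp only [eval_add, eval_mul, eval_pow, eval_C, eval_X]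
    linear_combination c₃ * hGp - (c₅ * p.1 + t * c₆) * hFp
  -- solutions above a root
  have hsol : ∀ x : K, Res.eval x = 0 →
      F (x, -(c₁ + c₂*x)/c₃) = 0 ∧ G (x, -(c₁ + c₂*x)/c₃) = 0 := by
    intro x hx
    rw [hRes2] at hx
    simp only [eval_add, eval_mul, eval_pow, eval_C, eval_X] at hx
    constructor
    · rw [hF]; field_simp; ring
    · rw [hG]; field_simp; linear_combination hx
  -- card of roots
  have hcard : Multiset.card Res.roots = 2 := by
    rw [← hdeg]
    exact (Polynomial.splits_iff_card_roots.mp (IsAlgClosed.splits Res))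
  -- Vieta
  obtain ⟨x₁, x₂, hx12⟩ := Multiset.card_eq_two.mp hcard
  have hlc : Res.leadingCoeff = -(c₂*c₅) := by
    rw [hRes2]
    exact Polynomial.leadingCoeff_quadratic (by simp [hc₂ne, hc₅ne])
  have hfact := Polynomial.C_leadingCoeff_mul_prod_multiset_X_sub_C
    (p := Res) (by rw [hcard, hdeg])
  rw [hx12, hlc] at hfact
  simp only [Multiset.insert_eq_cons, Multiset.map_cons, Multiset.map_singleton,
    Multiset.prod_cons, Multiset.prod_singleton] at hfact
  have hLHS : C (-(c₂*c₅)) * ((X - C x₁) * (X - C x₂))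
      = C (-(c₂*c₅)) * X^2 + C (c₂*c₅*(x₁+x₂)) * X + C (-(c₂*c₅*(x₁*x₂))) := by
    simp only [C_mul, C_add, C_neg]; ring
  have heq : C (-(c₂*c₅)) * X^2 + C (c₂*c₅*(x₁+x₂)) * X + C (-(c₂*c₅*(x₁*x₂)))
      = C (-(c₂*c₅)) * X^2 + C (c₃*c₄ - c₁*c₅ - t*c₂*c₆) * X + C (-(t*c₁*c₆)) :=
    (hLHS.symm.trans hfact).trans hRes2
  have e1 : c₂*c₅*(x₁+x₂) = c₃*c₄ - c₁*c₅ - t*c₂*c₆ := by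
    have h1 := congrArg (fun q : K[X] => q.coeff 1) heq
    simp only [coeff_add, coeff_C_mul, coeff_X_pow, coeff_X_one, coeff_C] at h1
    norm_num at h1
    exact h1
  have e0 : c₂*c₅*(x₁*x₂) = t*c₁*c₆ := by
    have h1 := congrArg (fun q : K[X] => q.coeff 0) heq
    simp only [coeff_add, coeff_C_mul, coeff_X_pow, coeff_X_zero, coeff_C] at h1
    norm_num at h1
    exact h1
  -- roots are nonzero
  have hprodne : t*c₁*c₆ ≠ 0 := mul_ne_zero (mul_ne_zero htne hc₁ne) hc₆ne
  have hx₁ne : x₁ ≠ 0 := by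
    intro h; apply hprodne; rw [← e0, h]; ring
  have hx₂ne : x₂ ≠ 0 := by
    intro h; apply hprodne; rw [← e0, h]; ring
  -- valuations of roots
  have hsum : v x₁ + v x₂ = ((1:ℝ) : WithTop ℝ) := by
    have h := congrArg v e0
    rw [hvmul, hvmul, hvmul, hvmul, hvmul, hc₂, hc₅, hc₁, hc₆, ht] at h
    simpa using h
  have hsumS : v (x₁ + x₂) = (r : WithTop ℝ) := by
    have h := congrArg v e1
    rw [hvmul, hvmul, hc₂, hc₅, hB] at h
    simpa using h
  obtain ⟨a, ha⟩ := WithTop.ne_top_iff_exists.mp (hvne x₁ hx₁ne)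
  obtain ⟨b, hb⟩ := WithTop.ne_top_iff_exists.mp (hvne x₂ hx₂ne)
  have hab : a + b = 1 := by
    rw [← ha, ← hb, ← WithTop.coe_add] at hsum
    exact_mod_cast hsum
  have hminr : min a b ≤ r := by
    have h := hvadd x₁ x₂
    rw [hsumS, ← ha, ← hb, ← WithTop.coe_min] at h
    exact_mod_cast h
  have hstrict1 : a < b → a = r := by
    intro h'
    have h2 := hvlt x₁ x₂ (by rw [← ha, ← hb]; exact_mod_cast h')
    rw [hsumS, ← ha] at h2
    exact_mod_cast h2.symm
  have hstrict2 : b < a → b = r := by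
    intro h'
    have h2 := hvlt x₂ x₁ (by rw [← ha, ← hb]; exact_mod_cast h')
    rw [add_comm x₂ x₁, hsumS, ← hb] at h2
    exact_mod_cast h2.symm
  have hdisj : (a = r ∧ b = 1 - r) ∨ (a = 1 - r ∧ b = r) := by
    rcases lt_trichotomy a b with h | h | h
    · have har := hstrict1 h; exact Or.inl ⟨har, by linarith⟩
    · rw [h, min_self] at hminr
      left; constructor <;> linarith
    · have hbr := hstrict2 h; exact Or.inr ⟨by linarith, hbr⟩
  -- r ≥ 0
  have hm1 : (0 : WithTop ℝ) ≤ v (c₃*c₄ - c₁*c₅) := by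
    have h := hvadd (c₃*c₄) (-(c₁*c₅))
    rw [hvneg, hvmul, hvmul, hc₃, hc₄, hc₁, hc₅] at h
    simpa [sub_eq_add_neg] using h
  have hm2 : (0 : WithTop ℝ) ≤ v (t*c₂*c₆) := by
    rw [hvmul, hvmul, ht, hc₂, hc₆]
    simpa using (by exact_mod_cast zero_le_one : ((0:ℝ) : WithTop ℝ) ≤ ((1:ℝ) : WithTop ℝ))
  have hr0 : (0:ℝ) ≤ r := by
    have h := hvadd (c₃*c₄ - c₁*c₅) (-(t*c₂*c₆))
    rw [hvneg, ← sub_eq_add_neg, hB] at h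
    have h2 : (0 : WithTop ℝ) ≤ (r : WithTop ℝ) := le_trans (le_min hm1 hm2) h
    exact_mod_cast h2
  have ha0 : 0 ≤ a := by rcases hdisj with ⟨h1, h2⟩ | ⟨h1, h2⟩ <;> linarith
  have hb0 : 0 ≤ b := by rcases hdisj with ⟨h1, h2⟩ | ⟨h1, h2⟩ <;> linarith
  -- valuation of the second coordinate
  have hvY : ∀ x : K, x ≠ 0 → ((0:ℝ) : WithTop ℝ) ≤ v x → Res.eval x = 0 →
      v (-(c₁ + c₂*x)/c₃) = 0 := by
    intro x hxne hxnn hxev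
    obtain ⟨hFs, hGs⟩ := hsol x hxev
    rcases eq_or_lt_of_le hxnn with h0 | hpos
    · -- v x = 0 : use G
      have hGe : (c₅*x + t*c₆) * (-(c₁ + c₂*x)/c₃) = -(c₄*x) := by
        have hGs' : c₄ * x + c₅ * x * (-(c₁ + c₂*x)/c₃) + t * c₆ * (-(c₁ + c₂*x)/c₃) = 0 := by
          rw [hG] at hGs; exact hGs
        linear_combination hGs'
      have h1 : v (c₅*x) < v (t*c₆) := by
        rw [hvmul, hc₅, zero_add, ← h0, hvmul, ht, hc₆, add_zero]
        exact_mod_cast (by norm_num : (0:ℝ) < 1)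
      have hvden : v (c₅*x + t*c₆) = ((0:ℝ) : WithTop ℝ) := by
        rw [hvlt (c₅*x) (t*c₆) h1, hvmul, hc₅, zero_add, ← h0]
      have h2 := congrArg v hGe
      rw [hvmul, hvden, hvneg, hvmul, hc₄, ← h0] at h2
      have h3 : ((0:ℝ) : WithTop ℝ) + v (-(c₁ + c₂*x)/c₃) = ((0:ℝ) : WithTop ℝ) + 0 := by
        rw [h2]; simp
      simpa using h3
    · -- 0 < v x : use F
      have hFe : c₃ * (-(c₁ + c₂*x)/c₃) = -(c₁ + c₂*x) := by field_simp
      have h1 : v c₁ < v (c₂*x) := by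
        rw [hc₁, hvmul, hc₂, zero_add]
        simpa using hpos
      have hnum : v (c₁ + c₂*x) = 0 := by
        rw [hvlt c₁ (c₂*x) h1, hc₁]
      have h2 := congrArg v hFe
      rw [hvmul, hc₃, hvneg, hnum, zero_add] at h2
      exact h2
  -- roots and their evaluations
  have hroot₁ : Res.eval x₁ = 0 := (mem_roots hResne).mp (by rw [hx12]; simp)
  have hroot₂ : Res.eval x₂ = 0 := (mem_roots hResne).mp (by rw [hx12]; simp)
  have hy₁ : v (-(c₁ + c₂*x₁)/c₃) = 0 :=
    hvY x₁ hx₁ne (by rw [← ha]; exact_mod_cast ha0) hroot₁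
  have hy₂ : v (-(c₁ + c₂*x₂)/c₃) = 0 :=
    hvY x₂ hx₂ne (by rw [← hb]; exact_mod_cast hb0) hroot₂
  refine ⟨hdeg, by rw [hcoeff0]; exact neg_ne_zero.mpr hprodne, htorus, hmem, ?_, hcard, ?_⟩
  · -- unique solutions over roots
    intro x hx
    have hev : Res.eval x = 0 := (mem_roots hResne).mp hx
    obtain ⟨hFs, hGs⟩ := hsol x hev
    refine ⟨-(c₁ + c₂*x)/c₃, ⟨hFs, hGs⟩, ?_⟩
    rintro y ⟨hFy, -⟩
    rw [hF] at hFy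
    field_simp
    linear_combination hFy
  · -- the multiset of valuations
    refine ⟨fun x => -(c₁ + c₂*x)/c₃, fun x hx => hsol x ((mem_roots hResne).mp hx), ?_⟩
    rw [hx12]
    simp only [Multiset.insert_eq_cons, Multiset.map_cons, Multiset.map_singleton]
    rw [hy₁, hy₂, ← ha, ← hb]
    rcases hdisj with ⟨h1, h2⟩ | ⟨h1, h2⟩
    · rw [h1, h2]
    · rw [h1, h2]
      exact Multiset.cons_swap _ _ _
end

section
/- Let K be an algebraically closed field equipped with a non-Archimedean additive valuation val : K → ℝ ∪ {∞}. Let t, c₁, ..., c₆ ∈ K with val(t) = 1 and val(cᵢ) = 0 for all i. Set f = c₁ + c₂x + c₃y, g = c₄x + c₅xy + t c₆y, and B = c₃c₄ − c₁c₅ − t c₂c₆, and suppose val(B) ≥ 1/2 (this includes the case B = 0). Then every common zero of f and g in K² lies in (K\{0})², and every common zero p = (p₁, p₂) satisfies (val(p₁), val(p₂)) = (1/2, 0). -/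
/-- Let `K` be an algebraically closed field with a non-Archimedean
additive valuation `v`, let `v t = 1`, `v cᵢ = 0`, and set `f = c₁ + c₂x + c₃y`,
`g = c₄x + c₅xy + t c₆ y` and `B = c₃c₄ − c₁c₅ − t c₂c₆`.  If `v B ≥ 1/2` (this
includes `B = 0`), then every common zero of `f` and `g` in `K²` lies in the torus
`(K \ {0})²`, and every common zero `p = (p₁, p₂)` satisfies
`(v p₁, v p₂) = (1/2, 0)`. -/
theorem trop_intersection_line_conic_degenerate {K : Type*} [Field K] [IsAlgClosed K]
    (v : K → WithTop ℝ)
    (hv0 : ∀ a : K, v a = ⊤ ↔ a = 0)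
    (hvmul : ∀ a b : K, v (a * b) = v a + v b)
    (hvadd : ∀ a b : K, min (v a) (v b) ≤ v (a + b))
    (t c₁ c₂ c₃ c₄ c₅ c₆ : K)
    (ht : v t = ((1 : ℝ) : WithTop ℝ))
    (hc₁ : v c₁ = 0) (hc₂ : v c₂ = 0) (hc₃ : v c₃ = 0)
    (hc₄ : v c₄ = 0) (hc₅ : v c₅ = 0) (hc₆ : v c₆ = 0)
    (hB : ((1 / 2 : ℝ) : WithTop ℝ) ≤ v (c₃ * c₄ - c₁ * c₅ - t * c₂ * c₆)) :
    ∀ p : K × K, c₁ + c₂ * p.1 + c₃ * p.2 = 0 →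
      c₄ * p.1 + c₅ * p.1 * p.2 + t * c₆ * p.2 = 0 →
      (p.1 ≠ 0 ∧ p.2 ≠ 0) ∧ v p.1 = ((1 / 2 : ℝ) : WithTop ℝ) ∧ v p.2 = 0 := by
  intro p hf hg
  -- basic nonvanishing of coefficients
  have ht0 : t ≠ 0 := by intro h; rw [(hv0 t).2 h] at ht; simp at ht
  have hc10 : c₁ ≠ 0 := by intro h; rw [(hv0 c₁).2 h] at hc₁; simp at hc₁
  have hc60 : c₆ ≠ 0 := by intro h; rw [(hv0 c₆).2 h] at hc₆; simp at hc₆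
  have hc40 : c₄ ≠ 0 := by intro h; rw [(hv0 c₄).2 h] at hc₄; simp at hc₄
  -- v 1 = 0
  have v1 : v 1 = 0 := by
    have h := hvmul 1 1
    rw [mul_one] at h
    have hne : v (1 : K) ≠ ⊤ := by simp [hv0]
    rcases WithTop.ne_top_iff_exists.mp hne with ⟨x, hx⟩
    rw [← hx] at h ⊢
    have hx1 : x = x + x := by exact_mod_cast h
    have hx2 : x = 0 := by linarith
    simp [hx2]
  have vneg : ∀ a : K, v (-a) = v a := by
    intro a
    have hm1 : v (-1 : K) = 0 := by
      have h := hvmul (-1 : K) (-1)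
      rw [neg_mul_neg, one_mul, v1] at h
      have hne : v (-1 : K) ≠ ⊤ := by simp [hv0]
      rcases WithTop.ne_top_iff_exists.mp hne with ⟨x, hx⟩
      rw [← hx] at h ⊢
      have hx0 : (0 : ℝ) = x + x := by exact_mod_cast h
      have hx2 : x = 0 := by linarith
      simp [hx2]
    have e : -a = -1 * a := by ring
    rw [e, hvmul, hm1, zero_add]
  have ultr : ∀ a b : K, v a < v b → v (a + b) = v a := by
    intro a b hab
    refine le_antisymm ?_ ((min_eq_left hab.le) ▸ hvadd a b)
    by_contra h
    push_neg at h
    have e : a + b + -b = a := by ring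
    have h2 := hvadd (a + b) (-b)
    rw [e, vneg] at h2
    have : v a < min (v (a + b)) (v b) := lt_min h hab
    exact absurd h2 (not_le.mpr this)
  -- nonvanishing of the point
  have hp1 : p.1 ≠ 0 := by
    intro h1
    have hg' : t * c₆ * p.2 = 0 := by rw [h1] at hg; linear_combination hg
    have hp2 : p.2 = 0 := by
      rcases mul_eq_zero.mp hg' with h | h
      · rcases mul_eq_zero.mp h with h | h
        · exact absurd h ht0
        · exact absurd h hc60
      · exact h
    rw [h1, hp2] at hf
    exact hc10 (by linear_combination hf)
  have hp2 : p.2 ≠ 0 := by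
    intro h2
    have hg' : c₄ * p.1 = 0 := by rw [h2] at hg; linear_combination hg
    have h1 : p.1 = 0 := by
      rcases mul_eq_zero.mp hg' with h | h
      · exact absurd h hc40
      · exact h
    rw [h1, h2] at hf
    exact hc10 (by linear_combination hf)
  -- extract real values
  have hne1 : v p.1 ≠ ⊤ := fun h => hp1 ((hv0 p.1).1 h)
  have hne2 : v p.2 ≠ ⊤ := fun h => hp2 ((hv0 p.2).1 h)
  rcases WithTop.ne_top_iff_exists.mp hne1 with ⟨r, hr⟩
  rcases WithTop.ne_top_iff_exists.mp hne2 with ⟨s, hs⟩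
  -- eliminating resultant
  have key : c₂ * (c₅ * (p.1 * p.1))
      = (c₃ * c₄ - c₁ * c₅ - t * c₂ * c₆) * p.1 + -(t * (c₁ * c₆)) := by
    linear_combination (c₅ * p.1 + t * c₆) * hf - c₃ * hg
  have vLHS : v (c₂ * (c₅ * (p.1 * p.1))) = ((r + r : ℝ) : WithTop ℝ) := by
    rw [hvmul, hvmul, hvmul, hc₂, hc₅, ← hr]
    push_cast
    rw [zero_add, zero_add]
  have vC : v (-(t * (c₁ * c₆))) = ((1 : ℝ) : WithTop ℝ) := by
    rw [vneg, hvmul, hvmul, ht, hc₁, hc₆]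
    rw [add_zero, add_zero]
  have vBx : ((1 / 2 + r : ℝ) : WithTop ℝ) ≤ v ((c₃ * c₄ - c₁ * c₅ - t * c₂ * c₆) * p.1) := by
    rw [hvmul, ← hr]
    push_cast
    exact add_le_add hB le_rfl
  have hr12 : r = 1 / 2 := by
    rcases lt_trichotomy r (1 / 2) with h | h | h
    · exfalso
      have h1 : ((r + r : ℝ) : WithTop ℝ) < ((1 / 2 + r : ℝ) : WithTop ℝ) := by
        exact_mod_cast by linarith
      have h2 : ((r + r : ℝ) : WithTop ℝ) < ((1 : ℝ) : WithTop ℝ) := by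
        exact_mod_cast by linarith
      have hmin := hvadd ((c₃ * c₄ - c₁ * c₅ - t * c₂ * c₆) * p.1) (-(t * (c₁ * c₆)))
      rw [← key, vLHS, vC] at hmin
      have : ((r + r : ℝ) : WithTop ℝ) < min (v ((c₃ * c₄ - c₁ * c₅ - t * c₂ * c₆) * p.1))
          (((1 : ℝ) : WithTop ℝ)) := lt_min (lt_of_lt_of_le h1 vBx) h2
      exact absurd hmin (not_le.mpr this)
    · exact h
    · exfalso
      have hlt : v (-(t * (c₁ * c₆))) < v ((c₃ * c₄ - c₁ * c₅ - t * c₂ * c₆) * p.1) := by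
        rw [vC]
        refine lt_of_lt_of_le ?_ vBx
        exact_mod_cast by linarith
      have := ultr _ _ hlt
      rw [add_comm] at this
      rw [← key, vLHS, vC] at this
      have : r + r = 1 := by exact_mod_cast this
      linarith
  -- value of y
  have hy : c₃ * p.2 = -c₁ + -(c₂ * p.1) := by linear_combination hf
  have hlt : v (-c₁) < v (-(c₂ * p.1)) := by
    rw [vneg, vneg, hc₁, hvmul, hc₂, ← hr, hr12]
    rw [zero_add]
    exact_mod_cast by norm_num
  have hvy : v (c₃ * p.2) = 0 := by
    rw [hy, ultr _ _ hlt, vneg, hc₁]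
  rw [hvmul, hc₃, zero_add, ← hs] at hvy
  have hs0 : s = 0 := by exact_mod_cast hvy
  refine ⟨⟨hp1, hp2⟩, ?_, ?_⟩
  · rw [← hr, hr12]
  · rw [← hs, hs0]; simp
end
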